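/- Let (X, f_{1,∞}) be a non-autonomous system with each f_n surjective, f_n → f uniformly, {f_n^k} converging collectively to {f^k}, and f_{1,∞} feebly open. Then (X, f_{1,∞}) is N-sensitive if and only if (X, f) is N-sensitive. -/
import Mathlib


open Metric Set MeasureTheory

/-- `nacomp f n = f_n ∘ ⋯ ∘ f_1` (and `nacomp f 0 = id`): the time-`n` map of the
non-autonomous system `f_{1,∞}`. -/
def nacomp {X : Type*} (f : ℕ → X → X) : ℕ → X → X
  | 0 => id
  | n + 1 => f (n + 1) ∘ nacomp f n

/-- `compFrom f i k = f_{i+k-1} ∘ ⋯ ∘ f_i`, i.e. `f_i^k`. -/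
def compFrom {X : Type*} (f : ℕ → X → X) (i : ℕ) : ℕ → X → X
  | 0 => id
  | k + 1 => f (i + k) ∘ compFrom f i k

/-- Multi-sensitivity of `f_{1,∞}` with respect to the vector `(v 0, …, v (r-1))`. -/
def multiSensWrt {X : Type*} [MetricSpace X] (f : ℕ → X → X) (r : ℕ) (v : ℕ → ℕ) : Prop :=
  ∃ δ > 0, ∀ U : ℕ → Set X, (∀ i < r, IsOpen (U i) ∧ (U i).Nonempty) →
    ∃ n ≥ 1, ∀ i < r, ∃ x ∈ U i, ∃ y ∈ U i,
      δ < dist (nacomp f (n * v i) x) (nacomp f (n * v i) y)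

/-- Strong multi-sensitivity: multi-sensitivity w.r.t. every vector in `ℕ^r`, every `r`. -/
def strongMultiSens {X : Type*} [MetricSpace X] (f : ℕ → X → X) : Prop :=
  ∀ r ≥ 1, ∀ v : ℕ → ℕ, (∀ i < r, 1 ≤ v i) → multiSensWrt f r v

/-- `𝒩`-sensitivity: multi-sensitivity w.r.t. `(1, 2, …, r)` for every `r`. -/
def nSens {X : Type*} [MetricSpace X] (f : ℕ → X → X) : Prop :=
  ∀ r ≥ 1, multiSensWrt f r (fun i => i + 1)

/-- Sensitivity of the non-autonomous system. -/
def sens {X : Type*} [MetricSpace X] (f : ℕ → X → X) : Prop :=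
  ∃ δ > 0, ∀ U : Set X, IsOpen U → U.Nonempty →
    ∃ n ≥ 1, ∃ x ∈ U, ∃ y ∈ U, δ < dist (nacomp f n x) (nacomp f n y)

/-- Multi-sensitivity of the non-autonomous system. -/
def multiSens {X : Type*} [MetricSpace X] (f : ℕ → X → X) : Prop :=
  ∃ δ > 0, ∀ r : ℕ, ∀ U : ℕ → Set X, (∀ i < r, IsOpen (U i) ∧ (U i).Nonempty) →
    ∃ n ≥ 1, ∀ i < r, ∃ x ∈ U i, ∃ y ∈ U i, δ < dist (nacomp f n x) (nacomp f n y)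

/-- Cofinite sensitivity: for some `δ > 0`, for every nonempty open `U` the set
`N_{f_{1,∞}}(U, δ)` is cofinite in `{1, 2, …}`. -/
def cofSens {X : Type*} [MetricSpace X] (f : ℕ → X → X) : Prop :=
  ∃ δ > 0, ∀ U : Set X, IsOpen U → U.Nonempty →
    {n : ℕ | 1 ≤ n ∧ ¬ ∃ x ∈ U, ∃ y ∈ U, δ < dist (nacomp f n x) (nacomp f n y)}.Finite

/-- Autonomous analogue of `multiSensWrt` for a single map `g`. -/
def multiSensWrtAuto {X : Type*} [MetricSpace X] (g : X → X) (r : ℕ) (v : ℕ → ℕ) : Prop :=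
  ∃ δ > 0, ∀ U : ℕ → Set X, (∀ i < r, IsOpen (U i) ∧ (U i).Nonempty) →
    ∃ n ≥ 1, ∀ i < r, ∃ x ∈ U i, ∃ y ∈ U i,
      δ < dist (g^[n * v i] x) (g^[n * v i] y)

def strongMultiSensAuto {X : Type*} [MetricSpace X] (g : X → X) : Prop :=
  ∀ r ≥ 1, ∀ v : ℕ → ℕ, (∀ i < r, 1 ≤ v i) → multiSensWrtAuto g r v

def nSensAuto {X : Type*} [MetricSpace X] (g : X → X) : Prop :=
  ∀ r ≥ 1, multiSensWrtAuto g r (fun i => i + 1)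

/-- `k`-periodicity of the non-autonomous system: `f_{j+kl} = f_j` for `l ≥ 1`, `1 ≤ j ≤ k`. -/
def kPeriodic {X : Type*} (f : ℕ → X → X) (k : ℕ) : Prop :=
  1 ≤ k ∧ ∀ l ≥ 1, ∀ j, 1 ≤ j → j ≤ k → f (j + k * l) = f j

/-- Multi-transitivity of the non-autonomous system. -/
def multiTrans {X : Type*} [TopologicalSpace X] (f : ℕ → X → X) : Prop :=
  ∀ m ≥ 1, ∀ U V : ℕ → Set X,
    (∀ i < m, IsOpen (U i) ∧ (U i).Nonempty ∧ IsOpen (V i) ∧ (V i).Nonempty) →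
    ∃ k ≥ 1, ∀ i < m, (nacomp f ((i + 1) * k) '' U i ∩ V i).Nonempty

/-- Multi-sensitivity w.r.t. a vector, for an explicit distance function `ρ`
(used for products equipped with the metric `√(d₁² + d₂²)`). -/
def multiSensWrtD {Z : Type*} [TopologicalSpace Z] (ρ : Z → Z → ℝ) (f : ℕ → Z → Z)
    (r : ℕ) (v : ℕ → ℕ) : Prop :=
  ∃ δ > 0, ∀ U : ℕ → Set Z, (∀ i < r, IsOpen (U i) ∧ (U i).Nonempty) →
    ∃ n ≥ 1, ∀ i < r, ∃ x ∈ U i, ∃ y ∈ U i,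
      δ < ρ (nacomp f (n * v i) x) (nacomp f (n * v i) y)

def strongMultiSensD {Z : Type*} [TopologicalSpace Z] (ρ : Z → Z → ℝ) (f : ℕ → Z → Z) : Prop :=
  ∀ r ≥ 1, ∀ v : ℕ → ℕ, (∀ i < r, 1 ≤ v i) → multiSensWrtD ρ f r v

def nSensD {Z : Type*} [TopologicalSpace Z] (ρ : Z → Z → ℝ) (f : ℕ → Z → Z) : Prop :=
  ∀ r ≥ 1, multiSensWrtD ρ f r (fun i => i + 1)

/-- The metric `√(d₁² + d₂²)` on a product of metric spaces. -/
noncomputable def prodDist {X Y : Type*} [MetricSpace X] [MetricSpace Y]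
    (p q : X × Y) : ℝ :=
  Real.sqrt (dist p.1 q.1 ^ 2 + dist p.2 q.2 ^ 2)

/-- `N_{f_{1,∞}^{[v]}}(U, δ)` for an explicit distance function `ρ`. -/
def NsetD {Z : Type*} (ρ : Z → Z → ℝ) (f : ℕ → Z → Z) (v : ℕ) (U : Set Z) (δ : ℝ) : Set ℕ :=
  {n : ℕ | 1 ≤ n ∧ ∃ x ∈ U, ∃ y ∈ U, δ < ρ (nacomp f (n * v) x) (nacomp f (n * v) y)}

/-- `N_{f_{1,∞}^{[v]} × g_{1,∞}^{[v']}}(U × U', δ)` for the product metric `√(d₁² + d₂²)`. -/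
noncomputable def NsetProd {X Y : Type*} [MetricSpace X] [MetricSpace Y]
    (f : ℕ → X → X) (g : ℕ → Y → Y) (v v' : ℕ) (U : Set X) (U' : Set Y) (δ : ℝ) : Set ℕ :=
  {n : ℕ | 1 ≤ n ∧ ∃ p ∈ U ×ˢ U', ∃ q ∈ U ×ˢ U',
    δ < prodDist (nacomp f (n * v) p.1, nacomp g (n * v') p.2)
                 (nacomp f (n * v) q.1, nacomp g (n * v') q.2)}

section AuxStmt14

variable {X : Type*} (f : ℕ → X → X)

lemma nacomp_add_apply (s k : ℕ) (x : X) :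
    nacomp f (s + k) x = compFrom f (s + 1) k (nacomp f s x) := by
  induction k with
  | zero => rfl
  | succ k ih =>
    have h1 : s + (k + 1) = (s + k) + 1 := by omega
    rw [h1]
    show f ((s + k) + 1) (nacomp f (s + k) x) = compFrom f (s + 1) (k + 1) (nacomp f s x)
    rw [ih]
    show f ((s + k) + 1) _ = f ((s + 1) + k) (compFrom f (s + 1) k (nacomp f s x))
    rw [show (s + 1) + k = (s + k) + 1 from by omega]

lemma nacomp_continuous [TopologicalSpace X] (hf : ∀ n, Continuous (f n)) (m : ℕ) :
    Continuous (nacomp f m) := by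
  induction m with
  | zero => exact continuous_id
  | succ m ih => exact (hf (m + 1)).comp ih

lemma nacomp_surjective (hsurj : ∀ n ≥ 1, Function.Surjective (f n)) (m : ℕ) :
    Function.Surjective (nacomp f m) := by
  induction m with
  | zero => exact Function.surjective_id
  | succ m ih => exact (hsurj (m + 1) (by omega)).comp ih

lemma nacomp_feeble [TopologicalSpace X]
    (hfeeble : ∀ n ≥ 1, ∀ U : Set X, IsOpen U → U.Nonempty →
      (interior (f n '' U)).Nonempty) (m : ℕ)
    (U : Set X) (hUo : IsOpen U) (hUne : U.Nonempty) :
    (interior (nacomp f m '' U)).Nonempty := by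
  induction m with
  | zero =>
    simpa [nacomp, hUo.interior_eq] using hUne
  | succ m ih =>
    have h1 : (interior (f (m + 1) '' interior (nacomp f m '' U))).Nonempty :=
      hfeeble (m + 1) (by omega) _ isOpen_interior ih
    refine h1.mono (interior_mono ?_)
    intro z hz
    obtain ⟨w, hw, rfl⟩ := hz
    obtain ⟨u, hu, rfl⟩ := interior_subset hw
    exact ⟨u, hu, rfl⟩

end AuxStmt14

/-- under surjectivity, uniform convergence, collective convergence
and feeble openness, `f_{1,∞}` is 𝒩-sensitive iff the limit `F` is. -/
theorem stmt_14 {X : Type*} [MetricSpace X] [CompactSpace X] (f : ℕ → X → X) (F : X → X)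
    (hf : ∀ n, Continuous (f n)) (hFc : Continuous F)
    (hsurj : ∀ n ≥ 1, Function.Surjective (f n))
    (hunif : ∀ ε > 0, ∃ N, ∀ n ≥ N, ∀ x, dist (f n x) (F x) < ε)
    (hcoll : ∀ ε > 0, ∃ N₀, ∀ N ≥ N₀, ∀ k, ∀ x, dist (compFrom f N k x) (F^[k] x) < ε)
    (hfeeble : ∀ n ≥ 1, ∀ U : Set X, IsOpen U → U.Nonempty →
      (interior (f n '' U)).Nonempty) :
    nSens f ↔ nSensAuto F := by
  constructor
  · -- f N-sensitive ⇒ F N-sensitive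
    intro hs r hr
    obtain ⟨δ, hδ, hsens⟩ := hs r hr
    obtain ⟨N₁, hN₁⟩ := hcoll (δ / 4) (by positivity)
    set q := max N₁ 1 with hqdef
    have hq1 : 1 ≤ q := le_max_right _ _
    have hqN : N₁ ≤ q := le_max_left _ _
    refine ⟨δ / 2, by positivity, ?_⟩
    intro U hU
    classical
    have hsur : ∀ m : ℕ, Function.Surjective (nacomp f m) := nacomp_surjective f hsurj
    have hcont : ∀ m : ℕ, Continuous (nacomp f m) := nacomp_continuous f hf
    have hWne : ∀ i, i < r → ∃ w, w ∈ (nacomp f ((i + 1) * q)) ⁻¹' (U i) := by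
      intro i hi
      obtain ⟨u, hu⟩ := (hU i hi).2
      obtain ⟨w, hw⟩ := hsur ((i + 1) * q) u
      exact ⟨w, by simp [Set.mem_preimage, hw, hu]⟩
    choose w hw using hWne
    set O : ℕ → Set X := fun i =>
      if h : i < r then
        (nacomp f ((i + 1) * q)) ⁻¹' (U i) ∩
          ⋂ j ∈ Finset.range (q * r + 1),
            (nacomp f j) ⁻¹' (Metric.ball (nacomp f j (w i h)) (δ / 2))
      else ∅ with hOdef
    have hOsub : ∀ i (h : i < r), O i ⊆ (nacomp f ((i + 1) * q)) ⁻¹' (U i) := by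
      intro i h
      simp only [hOdef, dif_pos h]
      exact Set.inter_subset_left
    have hOclose : ∀ i (h : i < r), ∀ x ∈ O i, ∀ j, j ≤ q * r →
        dist (nacomp f j x) (nacomp f j (w i h)) < δ / 2 := by
      intro i h x hx j hj
      simp only [hOdef, dif_pos h] at hx
      have hx2 := hx.2
      rw [Set.mem_iInter₂] at hx2
      have := hx2 j (Finset.mem_range.mpr (by omega))
      simpa [Metric.mem_ball] using this
    have hOopen : ∀ i, i < r → IsOpen (O i) := by
      intro i h
      simp only [hOdef, dif_pos h]
      refine IsOpen.inter ((hU i h).1.preimage (hcont _)) ?_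
      exact isOpen_biInter_finset fun j _ => (Metric.isOpen_ball).preimage (hcont _)
    have hOne : ∀ i, (h : i < r) → (O i).Nonempty := by
      intro i h
      refine ⟨w i h, ?_⟩
      simp only [hOdef, dif_pos h]
      refine ⟨hw i h, ?_⟩
      rw [Set.mem_iInter₂]
      intro j _
      simp only [Set.mem_preimage, Metric.mem_ball, dist_self]; positivity
    obtain ⟨n, hn1, hnsep⟩ := hsens O (fun i hi => ⟨hOopen i hi, hOne i hi⟩)
    have hqn : q < n := by
      by_contra hle
      push_neg at hle
      have h0 : 0 < r := hr
      obtain ⟨x, hx, y, hy, hxy⟩ := hnsep 0 h0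
      have hj : n * (0 + 1) ≤ q * r := by
        have : n ≤ q := hle
        calc n * (0 + 1) = n := by ring
          _ ≤ q := this
          _ ≤ q * r := Nat.le_mul_of_pos_right _ h0
      have d1 := hOclose 0 h0 x hx (n * (0 + 1)) hj
      have d2 := hOclose 0 h0 y hy (n * (0 + 1)) hj
      have htri := dist_triangle (nacomp f (n * (0 + 1)) x)
        (nacomp f (n * (0 + 1)) (w 0 h0)) (nacomp f (n * (0 + 1)) y)
      have hcomm := dist_comm (nacomp f (n * (0 + 1)) y)
        (nacomp f (n * (0 + 1)) (w 0 h0))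
      linarith
    set m := n - q with hmdef
    have hmn : n = q + m := by omega
    refine ⟨m, by omega, ?_⟩
    intro i hi
    obtain ⟨x, hx, y, hy, hxy⟩ := hnsep i hi
    have hxU : nacomp f ((i + 1) * q) x ∈ U i := hOsub i hi hx
    have hyU : nacomp f ((i + 1) * q) y ∈ U i := hOsub i hi hy
    have hdec : ∀ z : X, nacomp f (n * (i + 1)) z =
        compFrom f ((i + 1) * q + 1) ((i + 1) * m) (nacomp f ((i + 1) * q) z) := by
      intro z
      have harith : n * (i + 1) = (i + 1) * q + (i + 1) * m := by
        rw [hmn]; ring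
      rw [harith, nacomp_add_apply]
    have hNle : N₁ ≤ (i + 1) * q + 1 := by
      have : q ≤ (i + 1) * q := Nat.le_mul_of_pos_left _ (by omega)
      omega
    have e1 : dist (nacomp f (n * (i + 1)) x)
        (F^[(i + 1) * m] (nacomp f ((i + 1) * q) x)) < δ / 4 := by
      rw [hdec x]
      exact hN₁ ((i + 1) * q + 1) hNle ((i + 1) * m) _
    have e2 : dist (nacomp f (n * (i + 1)) y)
        (F^[(i + 1) * m] (nacomp f ((i + 1) * q) y)) < δ / 4 := by
      rw [hdec y]
      exact hN₁ ((i + 1) * q + 1) hNle ((i + 1) * m) _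
    refine ⟨_, hxU, _, hyU, ?_⟩
    have hmul : m * (i + 1) = (i + 1) * m := Nat.mul_comm _ _
    rw [hmul]
    have h4 := dist_triangle4 (nacomp f (n * (i + 1)) x)
      (F^[(i + 1) * m] (nacomp f ((i + 1) * q) x))
      (F^[(i + 1) * m] (nacomp f ((i + 1) * q) y))
      (nacomp f (n * (i + 1)) y)
    have hcomm := dist_comm (F^[(i + 1) * m] (nacomp f ((i + 1) * q) y))
      (nacomp f (n * (i + 1)) y)
    linarith
  · -- F N-sensitive ⇒ f N-sensitive
    intro hS r hr
    obtain ⟨δ, hδ, hsens⟩ := hS r hr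
    obtain ⟨N₁, hN₁⟩ := hcoll (δ / 4) (by positivity)
    set q := max N₁ 1 with hqdef
    have hq1 : 1 ≤ q := le_max_right _ _
    have hqN : N₁ ≤ q := le_max_left _ _
    refine ⟨δ / 2, by positivity, ?_⟩
    intro U hU
    classical
    set V : ℕ → Set X := fun i =>
      if h : i < r then interior (nacomp f ((i + 1) * q) '' U i) else ∅ with hVdef
    have hV : ∀ i < r, IsOpen (V i) ∧ (V i).Nonempty := by
      intro i hi
      simp only [hVdef, dif_pos hi]
      exact ⟨isOpen_interior,
        nacomp_feeble f hfeeble ((i + 1) * q) (U i) (hU i hi).1 (hU i hi).2⟩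
    obtain ⟨m, hm1, hsep⟩ := hsens V hV
    refine ⟨q + m, by omega, ?_⟩
    intro i hi
    obtain ⟨x', hx', y', hy', hxy⟩ := hsep i hi
    simp only [hVdef, dif_pos hi] at hx' hy'
    obtain ⟨x, hxU, hxe⟩ := interior_subset hx'
    obtain ⟨y, hyU, hye⟩ := interior_subset hy'
    refine ⟨x, hxU, y, hyU, ?_⟩
    have hdec : ∀ z : X, nacomp f ((q + m) * (i + 1)) z =
        compFrom f ((i + 1) * q + 1) ((i + 1) * m) (nacomp f ((i + 1) * q) z) := by
      intro z
      have harith : (q + m) * (i + 1) = (i + 1) * q + (i + 1) * m := by ring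
      rw [harith, nacomp_add_apply]
    have hNle : N₁ ≤ (i + 1) * q + 1 := by
      have : q ≤ (i + 1) * q := Nat.le_mul_of_pos_left _ (by omega)
      omega
    have e1 : dist (nacomp f ((q + m) * (i + 1)) x) (F^[(i + 1) * m] x') < δ / 4 := by
      rw [hdec x, hxe]
      exact hN₁ ((i + 1) * q + 1) hNle ((i + 1) * m) _
    have e2 : dist (nacomp f ((q + m) * (i + 1)) y) (F^[(i + 1) * m] y') < δ / 4 := by
      rw [hdec y, hye]
      exact hN₁ ((i + 1) * q + 1) hNle ((i + 1) * m) _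
    have hmul : (i + 1) * m = m * (i + 1) := Nat.mul_comm _ _
    rw [hmul] at e1 e2
    have h4 := dist_triangle4 (F^[m * (i + 1)] x') (nacomp f ((q + m) * (i + 1)) x)
      (nacomp f ((q + m) * (i + 1)) y) (F^[m * (i + 1)] y')
    have hc1 := dist_comm (nacomp f ((q + m) * (i + 1)) x) (F^[m * (i + 1)] x')
    linarith
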